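/- Let U and W be graphons (symmetric integrable functions on [0,1]²), q ∈ ℕ, and ρ a fractional q-partition of [0,1]. Then d₁(U/ρ, W/ρ) ≤ q² ‖U - W‖_□, where U/ρ = (α(ρ), β(U/ρ)) with α_i(ρ) = ∫ρ_i and β_{ij}(U/ρ) = ∫ ρ_i(x)ρ_j(y)U(x,y) dx dy, and d₁ is the ℓ¹ distance on the pairs (α,β). -/

import Mathlib

open MeasureTheory

/-- Cut norm of `W : [0,1]² → ℝ`. -/
noncomputable def cutNorm (W : ℝ × ℝ → ℝ) : ℝ :=
  sSup {r : ℝ | ∃ S T : Set ℝ, MeasurableSet S ∧ MeasurableSet T ∧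
    S ⊆ Set.Icc 0 1 ∧ T ⊆ Set.Icc 0 1 ∧ r = |∫ z in S ×ˢ T, W z|}

/-- A fractional `q`-partition of `[0,1]`. -/
def IsFracPartition (q : ℕ) (ρ : Fin q → ℝ → ℝ) : Prop :=
  (∀ i, Measurable (ρ i)) ∧ (∀ i x, ρ i x ∈ Set.Icc (0:ℝ) 1) ∧
    (∀ x, ∑ i, ρ i x = 1)

/-- `α_i(ρ) = ∫₀¹ ρ_i`. -/
noncomputable def qalpha (q : ℕ) (ρ : Fin q → ℝ → ℝ) : Fin q → ℝ :=
  fun i => ∫ x in Set.Icc (0:ℝ) 1, ρ i x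

/-- `β_{ij}(W/ρ) = ∫ ρ_i(x) ρ_j(y) W(x,y) dx dy`. -/
noncomputable def qbeta (q : ℕ) (W : ℝ × ℝ → ℝ) (ρ : Fin q → ℝ → ℝ) :
    Fin q → Fin q → ℝ :=
  fun i j => ∫ z in Set.Icc (0:ℝ) 1 ×ˢ Set.Icc (0:ℝ) 1, ρ i z.1 * ρ j z.2 * W z

/-- `ℓ¹` distance on quotients `(α, β)`. -/
def d1Q {q : ℕ} (p p' : (Fin q → ℝ) × (Fin q → Fin q → ℝ)) : ℝ :=
  (∑ i, |p.1 i - p'.1 i|) + ∑ i, ∑ j, |p.2 i j - p'.2 i j|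


lemma key1 (f h : ℝ → ℝ) (hf : Measurable f) (hf0 : ∀ x, 0 ≤ f x) (hf1 : ∀ x, f x ≤ 1)
    (hh : IntegrableOn h (Set.Icc (0:ℝ) 1)) :
    ∃ S, MeasurableSet S ∧ S ⊆ Set.Icc (0:ℝ) 1 ∧
      |∫ x in Set.Icc (0:ℝ) 1, f x * h x| ≤ |∫ x in S, h x| := by
  set I : Set ℝ := Set.Icc (0:ℝ) 1 with hI
  have hImeas : MeasurableSet I := measurableSet_Icc
  have hmk : ∀ᵐ x ∂(volume.restrict I), h x = hh.1.mk h x := hh.1.ae_eq_mk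
  set h' := hh.1.mk h with hh'
  have hh'm : Measurable h' := hh.1.stronglyMeasurable_mk.measurable
  set S₁ : Set ℝ := I ∩ {x | 0 ≤ h' x} with hS1
  set S₂ : Set ℝ := I ∩ {x | 0 ≤ h' x}ᶜ with hS2
  have hS1m : MeasurableSet S₁ := hImeas.inter (measurableSet_le measurable_const hh'm)
  have hS2m : MeasurableSet S₂ := hImeas.inter (measurableSet_le measurable_const hh'm).compl
  have hfh : IntegrableOn (fun x => f x * h x) I :=
    hh.bdd_mul (c := 1) hf.aestronglyMeasurable (Filter.Eventually.of_forall fun x => by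
      rw [Real.norm_eq_abs, abs_of_nonneg (hf0 x)]; exact hf1 x)
  have hunion : S₁ ∪ S₂ = I := by
    rw [hS1, hS2, ← Set.inter_union_distrib_left, Set.union_compl_self, Set.inter_univ]
  have hdisj : Disjoint S₁ S₂ := by
    apply Set.disjoint_left.mpr; rintro x ⟨-, hx1⟩ ⟨-, hx2⟩; exact hx2 hx1
  -- a.e. facts on S₁, S₂
  have hmk1 : ∀ᵐ x ∂(volume.restrict S₁), h x = h' x :=
    ae_restrict_of_ae_restrict_of_subset Set.inter_subset_left hmk
  have hmk2 : ∀ᵐ x ∂(volume.restrict S₂), h x = h' x :=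
    ae_restrict_of_ae_restrict_of_subset Set.inter_subset_left hmk
  have hpos1 : ∀ᵐ x ∂(volume.restrict S₁), 0 ≤ h x := by
    filter_upwards [hmk1, ae_restrict_mem hS1m] with x hx hx2
    rw [hx]; exact hx2.2
  have hneg2 : ∀ᵐ x ∂(volume.restrict S₂), h x ≤ 0 := by
    filter_upwards [hmk2, ae_restrict_mem hS2m] with x hx hx2
    rw [hx]; exact le_of_not_ge hx2.2
  have hi1 : IntegrableOn h S₁ := hh.mono_set Set.inter_subset_left
  have hi2 : IntegrableOn h S₂ := hh.mono_set Set.inter_subset_left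
  have hfi1 : IntegrableOn (fun x => f x * h x) S₁ := hfh.mono_set Set.inter_subset_left
  have hfi2 : IntegrableOn (fun x => f x * h x) S₂ := hfh.mono_set Set.inter_subset_left
  have hsplit : ∫ x in I, f x * h x = (∫ x in S₁, f x * h x) + ∫ x in S₂, f x * h x := by
    rw [← hunion, setIntegral_union hdisj hS2m hfi1 hfi2]
  -- bounds
  have hub1 : ∫ x in S₁, f x * h x ≤ ∫ x in S₁, h x := by
    apply integral_mono_ae hfi1 hi1
    filter_upwards [hpos1] with x hx
    calc f x * h x ≤ 1 * h x := mul_le_mul_of_nonneg_right (hf1 x) hx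
    _ = h x := one_mul _
  have hlb1 : 0 ≤ ∫ x in S₁, f x * h x :=
    integral_nonneg_of_ae (by filter_upwards [hpos1] with x hx; exact mul_nonneg (hf0 x) hx)
  have hub2 : ∫ x in S₂, f x * h x ≤ 0 :=
    integral_nonpos_of_ae (by filter_upwards [hneg2] with x hx; exact mul_nonpos_of_nonneg_of_nonpos (hf0 x) hx)
  have hlb2 : ∫ x in S₂, h x ≤ ∫ x in S₂, f x * h x := by
    apply integral_mono_ae hi2 hfi2
    filter_upwards [hneg2] with x hx
    calc h x = 1 * h x := (one_mul _).symm
    _ ≤ f x * h x := mul_le_mul_of_nonpos_right (hf1 x) hx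
  rcases le_or_gt 0 (∫ x in I, f x * h x) with hc | hc
  · refine ⟨S₁, hS1m, Set.inter_subset_left, ?_⟩
    rw [abs_of_nonneg hc]
    calc ∫ x in I, f x * h x ≤ (∫ x in S₁, h x) + 0 := by rw [hsplit]; exact add_le_add hub1 hub2
    _ = ∫ x in S₁, h x := add_zero _
    _ ≤ |∫ x in S₁, h x| := le_abs_self _
  · refine ⟨S₂, hS2m, Set.inter_subset_left, ?_⟩
    rw [abs_of_neg hc]
    have : (∫ x in S₂, h x) ≤ ∫ x in I, f x * h x := by
      rw [hsplit]
      calc (∫ x in S₂, h x) = 0 + ∫ x in S₂, h x := (zero_add _).symm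
      _ ≤ (∫ x in S₁, f x * h x) + ∫ x in S₂, f x * h x := add_le_add hlb1 hlb2
    calc -∫ x in I, f x * h x ≤ -∫ x in S₂, h x := neg_le_neg this
    _ ≤ |∫ x in S₂, h x| := neg_le_abs _

lemma cut_mem_le (V : ℝ × ℝ → ℝ) (hV : IntegrableOn V (Set.Icc (0:ℝ) 1 ×ˢ Set.Icc (0:ℝ) 1))
    {S T : Set ℝ} (hS : MeasurableSet S) (hT : MeasurableSet T)
    (hSI : S ⊆ Set.Icc 0 1) (hTI : T ⊆ Set.Icc 0 1) :
    |∫ z in S ×ˢ T, V z| ≤ sSup {r : ℝ | ∃ S T : Set ℝ, MeasurableSet S ∧ MeasurableSet T ∧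
      S ⊆ Set.Icc 0 1 ∧ T ⊆ Set.Icc 0 1 ∧ r = |∫ z in S ×ˢ T, V z|} := by
  apply le_csSup
  · refine ⟨∫ z in Set.Icc (0:ℝ) 1 ×ˢ Set.Icc (0:ℝ) 1, |V z|, ?_⟩
    rintro r ⟨S', T', hS', hT', hSI', hTI', rfl⟩
    calc |∫ z in S' ×ˢ T', V z| ≤ ∫ z in S' ×ˢ T', |V z| :=
          by simpa [Real.norm_eq_abs] using norm_integral_le_integral_norm (μ := volume.restrict (S' ×ˢ T')) V
    _ ≤ ∫ z in Set.Icc (0:ℝ) 1 ×ˢ Set.Icc (0:ℝ) 1, |V z| := by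
        apply setIntegral_mono_set hV.abs
        · exact Filter.Eventually.of_forall fun z => abs_nonneg _
        · exact HasSubset.Subset.eventuallyLE (Set.prod_mono hSI' hTI')
  · exact ⟨S, T, hS, hT, hSI, hTI, rfl⟩


lemma key2 (V : ℝ × ℝ → ℝ) (hV : IntegrableOn V (Set.Icc (0:ℝ) 1 ×ˢ Set.Icc (0:ℝ) 1))
    (f g : ℝ → ℝ) (hf : Measurable f) (hf0 : ∀ x, 0 ≤ f x) (hf1 : ∀ x, f x ≤ 1)
    (hg : Measurable g) (hg0 : ∀ x, 0 ≤ g x) (hg1 : ∀ x, g x ≤ 1) :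
    |∫ z in Set.Icc (0:ℝ) 1 ×ˢ Set.Icc (0:ℝ) 1, f z.1 * g z.2 * V z| ≤
      sSup {r : ℝ | ∃ S T : Set ℝ, MeasurableSet S ∧ MeasurableSet T ∧
        S ⊆ Set.Icc 0 1 ∧ T ⊆ Set.Icc 0 1 ∧ r = |∫ z in S ×ˢ T, V z|} := by
  set I : Set ℝ := Set.Icc (0:ℝ) 1 with hIdef
  have hImeas : MeasurableSet I := measurableSet_Icc
  have hprod : ∀ (A B : Set ℝ), (volume : Measure (ℝ × ℝ)).restrict (A ×ˢ B)
      = (volume.restrict A).prod (volume.restrict B) := fun A B => by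
    rw [Measure.prod_restrict, ← Measure.volume_eq_prod]
  -- G z = g z.2 * V z integrable on I × I
  have hGon : IntegrableOn (fun z : ℝ × ℝ => g z.2 * V z) (I ×ˢ I) :=
    hV.bdd_mul (hg.comp measurable_snd).aestronglyMeasurable (c := 1)
      (Filter.Eventually.of_forall fun z => by simp only [Function.comp_apply, Real.norm_eq_abs, abs_of_nonneg (hg0 _)]; exact hg1 _)
  have hFon : IntegrableOn (fun z : ℝ × ℝ => f z.1 * g z.2 * V z) (I ×ˢ I) := by
    have := hGon.bdd_mul (hf.comp measurable_fst).aestronglyMeasurable (c := 1)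
      (Filter.Eventually.of_forall fun z => by simp only [Function.comp_apply, Real.norm_eq_abs, abs_of_nonneg (hf0 _)]; exact hf1 _)
    simpa [mul_assoc, IntegrableOn] using this
  set h : ℝ → ℝ := fun x => ∫ y in I, g y * V (x, y) with hhdef
  have hhint : IntegrableOn h I := by
    have : Integrable (fun z : ℝ × ℝ => g z.2 * V z)
        ((volume.restrict I).prod (volume.restrict I)) := by rw [← hprod]; exact hGon
    exact this.integral_prod_left
  have step0 : ∫ z in I ×ˢ I, f z.1 * g z.2 * V z = ∫ x in I, f x * h x := by
    rw [hprod, integral_prod _ (by rw [← hprod]; exact hFon)]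
    refine setIntegral_congr_fun hImeas fun x _ => ?_
    simp only [hhdef, mul_assoc]
    rw [integral_const_mul]
  obtain ⟨S, hSm, hSI, hSle⟩ := key1 f h hf hf0 hf1 hhint
  set k : ℝ → ℝ := fun y => ∫ x in S, V (x, y) with hkdef
  have hGS : Integrable (fun z : ℝ × ℝ => g z.2 * V z)
      ((volume.restrict S).prod (volume.restrict I)) := by
    rw [← hprod]; exact hGon.mono_set (Set.prod_mono hSI le_rfl)
  have hVS : Integrable V ((volume.restrict S).prod (volume.restrict I)) := by
    rw [← hprod]; exact hV.mono_set (Set.prod_mono hSI le_rfl)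
  have hkint : IntegrableOn k I := hVS.integral_prod_right
  have step1 : ∫ x in S, h x = ∫ y in I, g y * k y := by
    calc ∫ x in S, h x = ∫ z, g z.2 * V z ∂((volume.restrict S).prod (volume.restrict I)) := by
          rw [integral_prod _ hGS]
    _ = ∫ y in I, ∫ x in S, g y * V (x, y) := integral_prod_symm _ hGS
    _ = ∫ y in I, g y * k y := by
          refine setIntegral_congr_fun hImeas fun y _ => ?_
          simp only [hkdef]
          rw [integral_const_mul]
  obtain ⟨T, hTm, hTI, hTle⟩ := key1 g k hg hg0 hg1 hkint
  have hVST : Integrable V ((volume.restrict S).prod (volume.restrict T)) := by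
    rw [← hprod]; exact hV.mono_set (Set.prod_mono hSI hTI)
  have step2 : ∫ y in T, k y = ∫ z in S ×ˢ T, V z := by
    rw [hprod]
    exact (integral_prod_symm _ hVST).symm
  calc |∫ z in I ×ˢ I, f z.1 * g z.2 * V z| = |∫ x in I, f x * h x| := by rw [step0]
  _ ≤ |∫ x in S, h x| := hSle
  _ = |∫ y in I, g y * k y| := by rw [step1]
  _ ≤ |∫ y in T, k y| := hTle
  _ = |∫ z in S ×ˢ T, V z| := by rw [step2]
  _ ≤ _ := cut_mem_le V hV hSm hTm hSI hTI

lemma intOn_mul (U : ℝ × ℝ → ℝ) (hU : IntegrableOn U (Set.Icc (0:ℝ) 1 ×ˢ Set.Icc (0:ℝ) 1))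
    (f g : ℝ → ℝ) (hf : Measurable f) (hf0 : ∀ x, 0 ≤ f x) (hf1 : ∀ x, f x ≤ 1)
    (hg : Measurable g) (hg0 : ∀ x, 0 ≤ g x) (hg1 : ∀ x, g x ≤ 1) :
    IntegrableOn (fun z : ℝ × ℝ => f z.1 * g z.2 * U z)
      (Set.Icc (0:ℝ) 1 ×ˢ Set.Icc (0:ℝ) 1) := by
  have h1 := hU.bdd_mul (hg.comp measurable_snd).aestronglyMeasurable (c := 1)
    (Filter.Eventually.of_forall fun z => by simp only [Function.comp_apply, Real.norm_eq_abs, abs_of_nonneg (hg0 _)]; exact hg1 _)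
  have h2 := h1.bdd_mul (hf.comp measurable_fst).aestronglyMeasurable (c := 1)
    (Filter.Eventually.of_forall fun z => by simp only [Function.comp_apply, Real.norm_eq_abs, abs_of_nonneg (hf0 _)]; exact hf1 _)
  simpa [mul_assoc, IntegrableOn] using h2

/-- `d₁(U/ρ, W/ρ) ≤ q² ‖U - W‖_□`. -/
theorem stmt9 (q : ℕ) (U W : ℝ × ℝ → ℝ)
    (hU : IntegrableOn U (Set.Icc (0:ℝ) 1 ×ˢ Set.Icc (0:ℝ) 1))
    (hW : IntegrableOn W (Set.Icc (0:ℝ) 1 ×ˢ Set.Icc (0:ℝ) 1))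
    (hUs : ∀ x y : ℝ, U (x, y) = U (y, x))
    (hWs : ∀ x y : ℝ, W (x, y) = W (y, x))
    (ρ : Fin q → ℝ → ℝ) (hρ : IsFracPartition q ρ) :
    d1Q (qalpha q ρ, qbeta q U ρ) (qalpha q ρ, qbeta q W ρ) ≤
      (q : ℝ)^2 * cutNorm (fun z => U z - W z) := by
  obtain ⟨hm, h01, hsum⟩ := hρ
  have hV : IntegrableOn (fun z => U z - W z) (Set.Icc (0:ℝ) 1 ×ˢ Set.Icc (0:ℝ) 1) := hU.sub hW
  have key : ∀ i j, |qbeta q U ρ i j - qbeta q W ρ i j| ≤ cutNorm (fun z => U z - W z) := by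
    intro i j
    have hUi := intOn_mul U hU (ρ i) (ρ j) (hm i) (fun x => (h01 i x).1) (fun x => (h01 i x).2)
      (hm j) (fun x => (h01 j x).1) (fun x => (h01 j x).2)
    have hWi := intOn_mul W hW (ρ i) (ρ j) (hm i) (fun x => (h01 i x).1) (fun x => (h01 i x).2)
      (hm j) (fun x => (h01 j x).1) (fun x => (h01 j x).2)
    have heq : qbeta q U ρ i j - qbeta q W ρ i j
        = ∫ z in Set.Icc (0:ℝ) 1 ×ˢ Set.Icc (0:ℝ) 1, ρ i z.1 * ρ j z.2 * (U z - W z) := by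
      simp only [qbeta]
      rw [← integral_sub hUi hWi]
      congr 1; funext z; ring
    rw [heq]
    exact key2 _ hV _ _ (hm i) (fun x => (h01 i x).1) (fun x => (h01 i x).2)
      (hm j) (fun x => (h01 j x).1) (fun x => (h01 j x).2)
  simp only [d1Q, sub_self, abs_zero, Finset.sum_const_zero, zero_add]
  calc ∑ i, ∑ j, |qbeta q U ρ i j - qbeta q W ρ i j|
      ≤ ∑ _i : Fin q, ∑ _j : Fin q, cutNorm (fun z => U z - W z) := by
        apply Finset.sum_le_sum; intro i _
        apply Finset.sum_le_sum; intro j _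
        exact key i j
  _ = (q : ℝ)^2 * cutNorm (fun z => U z - W z) := by
        simp [Finset.sum_const, Finset.card_univ]; ring
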